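/- Let H be a real separable Hilbert space and let (w_T)_{T>0} be a family of functions w_T : H → ℝ. Assume there are constants C > 0, K > 0, μ ≥ 0, η̂ > 0 and T₀ > 0 such that: (i) |w_T(x)| ≤ C(1 + ‖x‖^{1+μ}) for all T > 0 and x ∈ H; (ii) |w_T(x) − w_T(y)| ≤ K(1 + ‖x‖^{1+μ} + ‖y‖^{1+μ})‖x − y‖ for all T ≥ T₀ and x, y ∈ H; (iii) |w_T(x) − w_T(y)| ≤ C(1 + ‖x‖^{2+μ} + ‖y‖^{2+μ}) e^{−η̂ T} for all T > 0 and x, y ∈ H. Then there exist a real number L and a sequence (T_i)_{i∈ℕ} with T_i → +∞ such that for every x ∈ H, w_{T_i}(x) → L as i → ∞. -/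

import Mathlib

open Filter Topology

/-- Diagonal extraction: a family `(w_T)_{T>0}` that is polynomially bounded, locally
Lipschitz uniformly in `T ≥ T₀`, and has exponentially decaying oscillation, admits a sequence
of times `T_i → ∞` along which `w_{T_i}(x)` converges to a constant `L` for every `x`. -/
theorem stmt_7
    {H : Type*} [NormedAddCommGroup H] [InnerProductSpace ℝ H] [CompleteSpace H]
    [TopologicalSpace.SeparableSpace H]
    (w : ℝ → H → ℝ)
    (C K μ ηHat T₀ : ℝ) (hC : 0 < C) (hK : 0 < K) (hμ : 0 ≤ μ) (hηHat : 0 < ηHat)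
    (hT₀ : 0 < T₀)
    (hbound : ∀ T : ℝ, 0 < T → ∀ x : H, |w T x| ≤ C * (1 + ‖x‖ ^ (1 + μ)))
    (hlip : ∀ T : ℝ, T₀ ≤ T → ∀ x y : H,
      |w T x - w T y| ≤ K * (1 + ‖x‖ ^ (1 + μ) + ‖y‖ ^ (1 + μ)) * ‖x - y‖)
    (hosc : ∀ T : ℝ, 0 < T → ∀ x y : H,
      |w T x - w T y| ≤ C * (1 + ‖x‖ ^ (2 + μ) + ‖y‖ ^ (2 + μ)) * Real.exp (-ηHat * T)) :
    ∃ (L : ℝ) (Ts : ℕ → ℝ), (∀ i, 0 < Ts i) ∧ Tendsto Ts atTop atTop ∧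
      ∀ x : H, Tendsto (fun i => w (Ts i) x) atTop (𝓝 L) := by

  -- the sequence of values at 0 is bounded
  set f : ℕ → ℝ := fun n => w (T₀ + n) 0 with hf
  have hpos : ∀ n : ℕ, (0:ℝ) < T₀ + n := fun n => by positivity
  have hmem : ∀ n, f n ∈ Set.Icc (-C) C := by
    intro n
    have h := hbound (T₀ + n) (hpos n) 0
    rw [norm_zero, Real.zero_rpow (by linarith : (1:ℝ) + μ ≠ 0)] at h
    simp only [add_zero, mul_one] at h
    exact abs_le.mp h
  obtain ⟨L, -, φ, hφ, hLim⟩ := isCompact_Icc.tendsto_subseq hmem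
  refine ⟨L, fun i => T₀ + φ i, fun i => hpos _, ?_, ?_⟩
  · apply tendsto_atTop_add_const_left
    exact tendsto_natCast_atTop_atTop.comp hφ.tendsto_atTop
  · intro x
    have h0 : Tendsto (fun i : ℕ => w (T₀ + φ i) x - w (T₀ + φ i) 0) atTop (𝓝 0) := by
      have hb : Tendsto (fun i : ℕ => C * (1 + ‖x‖ ^ (2 + μ)) *
          Real.exp (-ηHat * (T₀ + φ i))) atTop (𝓝 0) := by
        rw [show (0:ℝ) = C * (1 + ‖x‖ ^ (2 + μ)) * 0 by ring]
        apply Tendsto.const_mul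
        apply Real.tendsto_exp_atBot.comp
        have : Tendsto (fun i : ℕ => (T₀ + φ i : ℝ)) atTop atTop := by
          apply tendsto_atTop_add_const_left
          exact tendsto_natCast_atTop_atTop.comp hφ.tendsto_atTop
        exact this.const_mul_atTop_of_neg (neg_neg_of_pos hηHat)
      refine squeeze_zero_norm (fun i => ?_) hb
      have h := hosc (T₀ + φ i) (hpos _) x 0
      rw [norm_zero, Real.zero_rpow (by linarith : (2:ℝ) + μ ≠ 0), add_zero] at h
      simpa using h
    have := h0.add hLim
    rw [zero_add] at this
    exact this.congr (fun i => by simp [f])
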